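/- arXiv:2005.11268 — 5 statements merged into one kernel-verified Lean document; each statement's English description precedes it below -/
import Mathlib

section
/- Let f(X_1,...,X_n) = \sum_{1\le i\le j\le n} a_{ij}X_iX_j with a_{ij} \in \mathbb{Z} be a positive definite integral quadratic form (i.e., \sum a_{ij}x_ix_j > 0 for every nonzero x \in \mathbb{R}^n). If f is almost primitively universal, then for every prime p there exists a nonzero vector x \in \mathbb{Z}_p^n (with coefficients a_{ij} viewed in the ring \mathbb{Z}_p of p-adic integers) such that f(x) = 0. -/
/-- If a positive definite integral quadratic form is almost primitively
universal, then it nontrivially represents zero over `ℤ_[p]` for all primes `p`. -/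
theorem stmt_0 {n : ℕ} (a : Fin n → Fin n → ℤ)
    (hpos : ∀ x : Fin n → ℝ, x ≠ 0 →
      0 < ∑ i : Fin n, ∑ j ∈ Finset.Ici i, (a i j : ℝ) * x i * x j)
    (hapu : ∃ N : ℤ, ∀ m : ℤ, N ≤ m → ∃ x : Fin n → ℤ,
      Finset.univ.gcd x = 1 ∧
      ∑ i : Fin n, ∑ j ∈ Finset.Ici i, a i j * x i * x j = m) :
    ∀ (p : ℕ) [Fact p.Prime], ∃ x : Fin n → ℤ_[p], x ≠ 0 ∧
      ∑ i : Fin n, ∑ j ∈ Finset.Ici i, (a i j : ℤ_[p]) * x i * x j = 0 := by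
  intro p hp
  obtain ⟨N, hN⟩ := hapu
  set c : ℤ := |N| + 1 with hc
  have hm : ∀ k : ℕ, ∃ x : Fin n → ℤ, Finset.univ.gcd x = 1 ∧
      ∑ i : Fin n, ∑ j ∈ Finset.Ici i, a i j * x i * x j = (p : ℤ) ^ k * c := by
    intro k
    apply hN
    have h1 : (1 : ℤ) ≤ (p : ℤ) ^ k := one_le_pow₀ (by exact_mod_cast hp.out.one_le)
    nlinarith [abs_nonneg N, le_abs_self N]
  choose x hgcd hfx using hm
  set y : ℕ → Fin n → ℤ_[p] := fun k i => ((x k i : ℤ) : ℤ_[p]) with hy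
  have hunit : ∀ k, ∃ i, ‖y k i‖ = 1 := by
    intro k
    by_contra h
    push_neg at h
    have hdvd : ∀ i ∈ Finset.univ, (p : ℤ) ∣ x k i := by
      intro i _
      have hlt : ‖y k i‖ < 1 := lt_of_le_of_ne (PadicInt.norm_le_one _) (h i)
      rwa [hy, PadicInt.norm_int_lt_one_iff_dvd] at hlt
    have hdg : (p : ℤ) ∣ Finset.univ.gcd (x k) := Finset.dvd_gcd hdvd
    rw [hgcd k] at hdg
    have := Int.le_of_dvd one_pos hdg
    have h2 : (2 : ℤ) ≤ (p : ℤ) := by exact_mod_cast hp.out.two_le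
    omega
  obtain ⟨z, -, φ, hφ, htend⟩ :=
    isCompact_univ.tendsto_subseq (x := y) (fun k => Set.mem_univ _)
  refine ⟨z, ?_, ?_⟩
  · intro hz0
    have hlt : ∀ i : Fin n, ∀ᶠ k in Filter.atTop, ‖y (φ k) i‖ < 1 := by
      intro i
      have hti : Filter.Tendsto (fun k => y (φ k) i) Filter.atTop (nhds (z i)) :=
        tendsto_pi_nhds.mp htend i
      have hzi : z i = 0 := congrFun hz0 i
      rw [hzi] at hti
      have : Filter.Tendsto (fun k => ‖y (φ k) i‖) Filter.atTop (nhds 0) := by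
        simpa using hti.norm
      exact this.eventually_lt_const one_pos
    have hall : ∀ᶠ k in Filter.atTop, ∀ i : Fin n, ‖y (φ k) i‖ < 1 :=
      Filter.eventually_all.2 hlt
    obtain ⟨k, hk⟩ := hall.exists
    obtain ⟨i, hi⟩ := hunit (φ k)
    exact absurd hi (ne_of_lt (hk i))
  · have hcont : Continuous (fun w : Fin n → ℤ_[p] =>
        ∑ i : Fin n, ∑ j ∈ Finset.Ici i, (a i j : ℤ_[p]) * w i * w j) := by
      fun_prop
    have h1 : Filter.Tendsto (fun k =>
        ∑ i : Fin n, ∑ j ∈ Finset.Ici i, (a i j : ℤ_[p]) * y (φ k) i * y (φ k) j)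
        Filter.atTop (nhds (∑ i : Fin n, ∑ j ∈ Finset.Ici i, (a i j : ℤ_[p]) * z i * z j)) :=
      (hcont.tendsto z).comp htend
    have hfy : ∀ k, ∑ i : Fin n, ∑ j ∈ Finset.Ici i, (a i j : ℤ_[p]) * y k i * y k j
        = (p : ℤ_[p]) ^ k * (c : ℤ_[p]) := by
      intro k
      have := congrArg (fun t : ℤ => (t : ℤ_[p])) (hfx k)
      push_cast at this
      simpa [hy] using this
    have hnp : ‖(p : ℤ_[p])‖ < 1 := by
      rw [PadicInt.norm_p]
      rw [inv_lt_one_iff₀]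
      right
      exact_mod_cast hp.out.one_lt
    have h2 : Filter.Tendsto (fun k : ℕ => (p : ℤ_[p]) ^ k * (c : ℤ_[p]))
        Filter.atTop (nhds 0) := by
      simpa using (tendsto_pow_atTop_nhds_zero_of_norm_lt_one hnp).mul_const ((c : ℤ_[p]))
    have h2' : Filter.Tendsto (fun k : ℕ => (p : ℤ_[p]) ^ (φ k) * (c : ℤ_[p]))
        Filter.atTop (nhds 0) := h2.comp hφ.tendsto_atTop
    have h1' : Filter.Tendsto (fun k =>
        ∑ i : Fin n, ∑ j ∈ Finset.Ici i, (a i j : ℤ_[p]) * y (φ k) i * y (φ k) j)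
        Filter.atTop (nhds 0) := by
      simpa [hfy] using h2'
    exact tendsto_nhds_unique h1 h1'
end

section
/- Let p be a prime, M a quadratic form over \mathbb{Z}_p in m \ge 1 variables, and K a quadratic form over \mathbb{Z}_p in k \ge 1 variables all of whose values lie in 4p\mathbb{Z}_p. If the orthogonal sum Q(x,y) = M(x) + K(y) represents every unit of \mathbb{Z}_p, then M represents every unit of \mathbb{Z}_p. -/
open Polynomial in
lemma exists_sqrt_of_close_one (p : ℕ) [Fact p.Prime] (w : ℤ_[p])
    (h : ‖w - 1‖ < ‖(2 : ℤ_[p])‖ ^ 2) : ∃ c : ℤ_[p], c ^ 2 = w := by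
  have hn : ‖(X ^ 2 - C w : ℤ_[p][X]).eval 1‖
      < ‖((X ^ 2 - C w : ℤ_[p][X]).derivative).eval 1‖ ^ 2 := by
    simp only [derivative_sub, derivative_pow, derivative_X, derivative_C,
      eval_sub, eval_pow, eval_X, eval_C, eval_mul, eval_natCast, eval_one, sub_zero]
    have h1 : ‖(1 : ℤ_[p]) ^ 2 - w‖ = ‖w - 1‖ := by
      rw [one_pow, ← norm_neg]; ring_nf
    have h2 : ((2 : ℕ) : ℤ_[p]) * 1 ^ (2 - 1) * 1 = (2 : ℤ_[p]) := by norm_num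
    rw [h1, h2]
    exact h
  obtain ⟨z, hz, -⟩ := hensels_lemma hn
  refine ⟨z, ?_⟩
  have := hz
  simp only [eval_sub, eval_pow, eval_X, eval_C, map_sub, map_pow, aeval_X, aeval_C, Algebra.algebraMap_self, RingHom.id_apply, sub_eq_zero] at this
  exact this

/-- Lemma 2.1(ii): if `M ⊥ K` represents all units of `ℤ_[p]` and all values of `K`
lie in `4pℤ_[p]`, then `M` represents all units. -/
theorem stmt_5 (p : ℕ) [Fact p.Prime]
    {m : ℕ} (hm : 1 ≤ m) (b : Fin m → Fin m → ℤ_[p])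
    (M : (Fin m → ℤ_[p]) → ℤ_[p])
    (hM : ∀ x, M x = ∑ i : Fin m, ∑ j ∈ Finset.Ici i, b i j * x i * x j)
    {k : ℕ} (hk : 1 ≤ k) (a : Fin k → Fin k → ℤ_[p])
    (K : (Fin k → ℤ_[p]) → ℤ_[p])
    (hK : ∀ y, K y = ∑ i : Fin k, ∑ j ∈ Finset.Ici i, a i j * y i * y j)
    (hnorm : ∀ y, (4 * p : ℤ_[p]) ∣ K y)
    (huniv : ∀ u : ℤ_[p], IsUnit u →
      ∃ (x : Fin m → ℤ_[p]) (y : Fin k → ℤ_[p]), M x + K y = u) :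
    ∀ u : ℤ_[p], IsUnit u → ∃ x : Fin m → ℤ_[p], M x = u := by
  intro u hu
  obtain ⟨x, y, hxy⟩ := huniv u hu
  -- M x = u - K y is a unit
  have hdvd : (4 * p : ℤ_[p]) ∣ K y := hnorm y
  have hpK : (p : ℤ_[p]) ∣ K y := dvd_trans (dvd_mul_left _ _) hdvd
  have hvunit : IsUnit (M x) := by
    rw [PadicInt.isUnit_iff]
    by_contra hne
    have hlt : ‖M x‖ < 1 := lt_of_le_of_ne (PadicInt.norm_le_one _) hne
    have hpM : (p : ℤ_[p]) ∣ M x := (PadicInt.norm_lt_one_iff_dvd _).mp hlt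
    have hpu : (p : ℤ_[p]) ∣ u := by
      rw [← hxy]; exact dvd_add hpM hpK
    have : ‖u‖ < 1 := (PadicInt.norm_lt_one_iff_dvd _).mpr hpu
    rw [PadicInt.isUnit_iff.mp hu] at this
    exact lt_irrefl _ this
  obtain ⟨v, hv⟩ := hvunit
  -- w = u * v⁻¹ ; w - 1 = K y * v⁻¹
  set w : ℤ_[p] := u * (↑v⁻¹ : ℤ_[p]) with hw
  have hw1 : w - 1 = K y * (↑v⁻¹ : ℤ_[p]) := by
    have : (↑v : ℤ_[p]) * ↑v⁻¹ = 1 := by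
      rw [← Units.val_mul, mul_inv_cancel, Units.val_one]
    calc w - 1 = u * ↑v⁻¹ - ↑v * ↑v⁻¹ := by rw [this, hw]
      _ = (u - M x) * ↑v⁻¹ := by rw [hv]; ring
      _ = K y * ↑v⁻¹ := by rw [← hxy]; ring_nf
  have h2pos : (0 : ℝ) < ‖(2 : ℤ_[p])‖ ^ 2 :=
    pow_pos (norm_pos_iff.mpr (two_ne_zero : (2 : ℤ_[p]) ≠ 0)) 2
  have hwlt : ‖w - 1‖ < ‖(2 : ℤ_[p])‖ ^ 2 := by
    rw [hw1]
    obtain ⟨t, ht⟩ := hdvd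
    rw [ht]
    calc ‖4 * (p : ℤ_[p]) * t * ↑v⁻¹‖ = ‖(4 : ℤ_[p])‖ * ‖(p : ℤ_[p])‖ * ‖t‖ * ‖(↑v⁻¹ : ℤ_[p])‖ := by
          rw [norm_mul, norm_mul, norm_mul]
      _ ≤ ‖(4 : ℤ_[p])‖ * ‖(p : ℤ_[p])‖ * 1 * 1 := by
          gcongr <;> exact PadicInt.norm_le_one _
      _ = ‖(2 : ℤ_[p])‖ ^ 2 * ‖(p : ℤ_[p])‖ := by
          have h4 : (4 : ℤ_[p]) = 2 * 2 := by norm_num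
          rw [h4, norm_mul]; ring
      _ < ‖(2 : ℤ_[p])‖ ^ 2 * 1 := by
          refine mul_lt_mul_of_pos_left ?_ h2pos
          rw [PadicInt.norm_p]
          have hp : 1 < (p : ℝ) := by
            exact_mod_cast (Fact.out : p.Prime).one_lt
          rw [inv_lt_one_iff₀]; right; exact hp
      _ = ‖(2 : ℤ_[p])‖ ^ 2 := mul_one _
  obtain ⟨c, hc⟩ := exists_sqrt_of_close_one p w hwlt
  refine ⟨fun i => c * x i, ?_⟩
  have hscale : M (fun i => c * x i) = c ^ 2 * M x := by
    rw [hM, hM, Finset.mul_sum]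
    refine Finset.sum_congr rfl fun i _ => ?_
    rw [Finset.mul_sum]
    exact Finset.sum_congr rfl fun j _ => by ring
  rw [hscale, hc, hw, ← hv]
  have : (↑v⁻¹ : ℤ_[p]) * ↑v = 1 := by
    rw [← Units.val_mul, inv_mul_cancel, Units.val_one]
  calc u * ↑v⁻¹ * ↑v = u * (↑v⁻¹ * ↑v) := by ring
    _ = u := by rw [this, mul_one]
end

section
/- Let p be a prime, \varepsilon \in \mathbb{Z}_p^\times, and let K be a quadratic form over \mathbb{Z}_p in m \ge 1 variables which represents every unit of \mathbb{Z}_p. Then the form Q(t,v) = \varepsilon t^2 + K(v) on \mathbb{Z}_p \times \mathbb{Z}_p^m is primitively \mathbb{Z}_p-universal: every nonzero \alpha \in \mathbb{Z}_p equals Q(t,v) for some (t,v) with at least one coordinate a unit. -/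
/-- Lemma 3.7: if `K` represents all units of `ℤ_[p]`, then `⟨ε⟩ ⊥ K` is primitively
`ℤ_[p]`-universal for any unit `ε`. -/
theorem stmt_8 (p : ℕ) [Fact p.Prime] (ε : ℤ_[p]) (hε : IsUnit ε)
    {m : ℕ} (hm : 1 ≤ m) (a : Fin m → Fin m → ℤ_[p])
    (K : (Fin m → ℤ_[p]) → ℤ_[p])
    (hK : ∀ v, K v = ∑ i : Fin m, ∑ j ∈ Finset.Ici i, a i j * v i * v j)
    (hunits : ∀ u : ℤ_[p], IsUnit u → ∃ v : Fin m → ℤ_[p], K v = u) :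
    ∀ α : ℤ_[p], α ≠ 0 → ∃ (t : ℤ_[p]) (v : Fin m → ℤ_[p]),
      (IsUnit t ∨ ∃ i, IsUnit (v i)) ∧ ε * t ^ 2 + K v = α := by
  intro α hα
  by_cases h : IsUnit (α - ε)
  · obtain ⟨v, hv⟩ := hunits _ h
    exact ⟨1, v, Or.inl isUnit_one, by rw [hv]; ring⟩
  · -- α - ε nonunit and ε unit force α to be a unit
    have hαu : IsUnit α := by
      by_contra hα'
      have : ε = α - (α - ε) := by ring
      have hmem : ε ∈ IsLocalRing.maximalIdeal ℤ_[p] := by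
        rw [this]
        exact Ideal.sub_mem _ ((IsLocalRing.mem_maximalIdeal _).2 (mem_nonunits_iff.2 hα'))
          ((IsLocalRing.mem_maximalIdeal _).2 (mem_nonunits_iff.2 h))
      exact (IsLocalRing.notMem_maximalIdeal.2 hε) hmem
    obtain ⟨v, hv⟩ := hunits _ hαu
    refine ⟨0, v, Or.inr ?_, by rw [hv]; ring⟩
    by_contra hno
    push_neg at hno
    have hdvd : ∀ i, (p : ℤ_[p]) ∣ v i := by
      intro i
      rw [← PadicInt.norm_lt_one_iff_dvd]
      exact lt_of_le_of_ne (PadicInt.norm_le_one _)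
        (fun hh => hno i (PadicInt.isUnit_iff.2 hh))
    have : (p : ℤ_[p]) ∣ α := by
      rw [← hv, hK]
      refine Finset.dvd_sum fun i _ => Finset.dvd_sum fun j _ => ?_
      exact Dvd.dvd.mul_left (hdvd j) _
    exact (PadicInt.isUnit_iff.1 hαu).not_lt
      (PadicInt.norm_lt_one_iff_dvd α |>.2 this) |>.elim
end

section
/- Let \varepsilon_1, \varepsilon_2, \varepsilon_3 \in \mathbb{Z}_2^\times and let Q(x,y,z) = \varepsilon_1 x^2 + \varepsilon_2 y^2 + \varepsilon_3 z^2 over \mathbb{Z}_2. Then the following are equivalent: (i) Q is \mathbb{Z}_2-universal; (ii) Q is primitively \mathbb{Z}_2-universal; (iii) there exist i, j \in {1,2,3} such that \varepsilon_i \equiv -\varepsilon_j \pmod{4\mathbb{Z}_2}. -/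
open Polynomial in
private lemma exists_sqrt' {γ : ℤ_[2]} (h : (PadicInt.toZModPow 3) γ = 1) :
    ∃ v : ℤ_[2], IsUnit v ∧ v ^ 2 = γ := by
  have h0 : (PadicInt.toZModPow 3) (γ - 1) = 0 := by rw [map_sub, h, map_one, sub_self]
  rw [← RingHom.mem_ker, PadicInt.ker_toZModPow, Ideal.mem_span_singleton] at h0
  obtain ⟨d, hd⟩ := h0
  have hd' : ‖γ - 1‖ ≤ 8⁻¹ := by
    rw [hd, norm_mul, PadicInt.norm_p_pow]
    calc ((2:ℕ):ℝ) ^ (-(3:ℕ):ℤ) * ‖d‖ ≤ ((2:ℕ):ℝ) ^ (-(3:ℕ):ℤ) * 1 := by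
          gcongr
          exact PadicInt.norm_le_one d
      _ ≤ 8⁻¹ := by norm_num
  have hnorm : ‖(X^2 - C γ : Polynomial ℤ_[2]).eval 1‖ <
      ‖(X^2 - C γ : Polynomial ℤ_[2]).derivative.eval 1‖ ^ 2 := by
    have heval : (X^2 - C γ : Polynomial ℤ_[2]).eval 1 = 1 - γ := by simp
    have hderiv : (X^2 - C γ : Polynomial ℤ_[2]).derivative.eval 1 = 2 := by
      simp [derivative_sub, derivative_pow]
    rw [heval, hderiv]
    have h2 : ‖(2:ℤ_[2])‖ = 2⁻¹ := by
      have := @PadicInt.norm_p 2 _; simpa using this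
    have hle : ‖(1:ℤ_[2]) - γ‖ ≤ 8⁻¹ := by
      rw [show (1:ℤ_[2]) - γ = -(γ-1) by ring, norm_neg]; exact hd'
    rw [h2]
    calc ‖(1:ℤ_[2]) - γ‖ ≤ 8⁻¹ := hle
      _ < (2⁻¹:ℝ)^2 := by norm_num
  obtain ⟨z, hz, -, -, -⟩ := hensels_lemma hnorm
  have hz2 : z ^ 2 = γ := by
    have := hz; simp only [Polynomial.coe_aeval_eq_eval, Polynomial.eval_sub, Polynomial.eval_pow, Polynomial.eval_X,
      Polynomial.eval_C] at this
    exact sub_eq_zero.mp this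
  have hγu : IsUnit γ := by
    rw [PadicInt.isUnit_iff]
    have hlt : ‖γ - 1‖ < 1 := lt_of_le_of_lt hd' (by norm_num)
    have hne : ‖(1:ℤ_[2])‖ ≠ ‖γ - 1‖ := by
      rw [norm_one]; exact fun hc => by rw [← hc] at hlt; norm_num at hlt
    calc ‖γ‖ = ‖1 + (γ - 1)‖ := by ring_nf
      _ = max ‖(1:ℤ_[2])‖ ‖γ - 1‖ := PadicInt.norm_add_eq_max_of_ne hne
      _ = 1 := by rw [norm_one]; exact max_eq_left hlt.le
  refine ⟨z, ?_, hz2⟩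
  have : IsUnit (z * z) := by rwa [← sq, hz2]
  exact isUnit_of_mul_isUnit_left this

private lemma cover8 : ∀ A B C Al : ZMod 8, 4*A = 4 → 4*B = 4 → 4*C = 4 → (A+B = 0 ∨ A+B = 4) →
    ∃ s t : Fin 3, Al = A + B*((s:ℕ):ZMod 8)^2 + C*((t:ℕ):ZMod 8)^2
        ∨ Al = A*((s:ℕ):ZMod 8)^2 + B + C*((t:ℕ):ZMod 8)^2 := by decide

set_option maxHeartbeats 1000000 in
private lemma miss8 : ∀ A B C : ZMod 8, (4*A=4 ∧ 4*B=4 ∧ 4*C=4 ∧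
    (A+B ≠ 0 ∧ A+B ≠ 4) ∧ (A+C ≠ 0 ∧ A+C ≠ 4) ∧ (B+C ≠ 0 ∧ B+C ≠ 4)) →
    ∀ x y z : ZMod 8, A*x^2+B*y^2+C*z^2 ≠ A+B+C+4 := by decide

private lemma unit4 : ∀ z w : ZMod 8, z * w = 1 → 4 * z = 4 := by decide

private lemma four_mul : ∀ d : ZMod 8, 4 * d = 0 ∨ 4 * d = 4 := by decide

private lemma diag8 : ∀ A D : ZMod 8, 4*A = 4 → A = -A + 4*D → False := by decide

private lemma phi_unit4 {a : ℤ_[2]} (ha : IsUnit a) :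
    4 * (PadicInt.toZModPow 3) a = 4 := by
  obtain ⟨u, rfl⟩ := ha
  have h1 : ((u : ℤ_[2]) * ↑u⁻¹) = 1 := u.mul_inv
  have := congrArg (PadicInt.toZModPow 3) h1
  rw [map_mul, map_one] at this
  exact unit4 _ _ this

private lemma base {a b c : ℤ_[2]} (ha : IsUnit a) (hb : IsUnit b) (hc : IsUnit c)
    (δ : ℤ_[2]) (hab : a + b = 4 * δ) (α : ℤ_[2]) :
    ∃ x y z : ℤ_[2], (IsUnit x ∨ IsUnit y) ∧ a*x^2 + b*y^2 + c*z^2 = α := by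
  set φ := (PadicInt.toZModPow 3 : ℤ_[2] →+* ZMod 8) with hφ
  have hAB : φ a + φ b = 4 * φ δ := by
    have := congrArg φ hab
    rwa [map_add, map_mul, map_ofNat] at this
  obtain ⟨s, t, hcase⟩ := cover8 (φ a) (φ b) (φ c) (φ α)
    (phi_unit4 ha) (phi_unit4 hb) (phi_unit4 hc) (hAB ▸ four_mul (φ δ))
  rcases hcase with hcase | hcase
  · -- Hensel on x : take y = s, z = t
    set y : ℤ_[2] := ((s:ℕ) : ℤ_[2]) with hy
    set z : ℤ_[2] := ((t:ℕ) : ℤ_[2]) with hz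
    have hw : a * (↑ha.unit⁻¹ : ℤ_[2]) = 1 := ha.mul_val_inv
    have hφw : φ a * φ (↑ha.unit⁻¹ : ℤ_[2]) = 1 := by
      have := congrArg φ hw; rwa [map_mul, map_one] at this
    have hγ : φ ((α - b*y^2 - c*z^2) * (↑ha.unit⁻¹ : ℤ_[2])) = 1 := by
      simp only [map_mul, map_sub, map_pow, hy, hz, map_natCast]
      linear_combination (φ (↑ha.unit⁻¹ : ℤ_[2])) * hcase + hφw
    obtain ⟨v, hvu, hv2⟩ := exists_sqrt' hγ
    exact ⟨v, y, z, Or.inl hvu, by linear_combination a * hv2 + (α - b*y^2 - c*z^2) * hw⟩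
  · -- Hensel on y : take x = s, z = t
    set x : ℤ_[2] := ((s:ℕ) : ℤ_[2]) with hx
    set z : ℤ_[2] := ((t:ℕ) : ℤ_[2]) with hz
    have hw : b * (↑hb.unit⁻¹ : ℤ_[2]) = 1 := hb.mul_val_inv
    have hφw : φ b * φ (↑hb.unit⁻¹ : ℤ_[2]) = 1 := by
      have := congrArg φ hw; rwa [map_mul, map_one] at this
    have hγ : φ ((α - a*x^2 - c*z^2) * (↑hb.unit⁻¹ : ℤ_[2])) = 1 := by
      simp only [map_mul, map_sub, map_pow, hx, hz, map_natCast]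
      linear_combination (φ (↑hb.unit⁻¹ : ℤ_[2])) * hcase + hφw
    obtain ⟨v, hvu, hv2⟩ := exists_sqrt' hγ
    exact ⟨x, v, z, Or.inr hvu, by linear_combination b * hv2 + (α - a*x^2 - c*z^2) * hw⟩

private lemma tri (ε : Fin 3 → ℤ_[2]) (hε : ∀ i, IsUnit (ε i))
    (h : ∃ i j : Fin 3, ∃ δ : ℤ_[2], ε i = -ε j + 4 * δ) :
    (∃ δ, ε 0 + ε 1 = 4*δ) ∨ (∃ δ, ε 0 + ε 2 = 4*δ) ∨ (∃ δ, ε 1 + ε 2 = 4*δ) := by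
  obtain ⟨i, j, δ, h⟩ := h
  have hdiag : ∀ k : Fin 3, ε k = -ε k + 4 * δ → False := fun k hk => by
    have := congrArg (PadicInt.toZModPow 3) hk
    rw [map_add, map_neg, map_mul, map_ofNat] at this
    exact diag8 _ _ (phi_unit4 (hε k)) this
  fin_cases i <;> fin_cases j
  · exact (hdiag 0 h).elim
  · exact Or.inl ⟨δ, by have h' : ε 0 = -ε 1 + 4 * δ := h; linear_combination h'⟩
  · exact Or.inr (Or.inl ⟨δ, by have h' : ε 0 = -ε 2 + 4 * δ := h; linear_combination h'⟩)
  · exact Or.inl ⟨δ, by have h' : ε 1 = -ε 0 + 4 * δ := h; linear_combination h'⟩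
  · exact (hdiag 1 h).elim
  · exact Or.inr (Or.inr ⟨δ, by have h' : ε 1 = -ε 2 + 4 * δ := h; linear_combination h'⟩)
  · exact Or.inr (Or.inl ⟨δ, by have h' : ε 2 = -ε 0 + 4 * δ := h; linear_combination h'⟩)
  · exact Or.inr (Or.inr ⟨δ, by have h' : ε 2 = -ε 1 + 4 * δ := h; linear_combination h'⟩)
  · exact (hdiag 2 h).elim

private lemma primrep (ε : Fin 3 → ℤ_[2]) (hε : ∀ i, IsUnit (ε i))
    (h : ∃ i j : Fin 3, ∃ δ : ℤ_[2], ε i = -ε j + 4 * δ) (α : ℤ_[2]) :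
    ∃ x : Fin 3 → ℤ_[2], (∃ i, IsUnit (x i)) ∧ ∑ i : Fin 3, ε i * x i ^ 2 = α := by
  rcases tri ε hε h with ⟨δ, hab⟩ | ⟨δ, hab⟩ | ⟨δ, hab⟩
  · obtain ⟨x, y, z, hu, heq⟩ := base (hε 0) (hε 1) (hε 2) δ hab α
    refine ⟨![x, y, z], ?_, ?_⟩
    · rcases hu with h' | h'
      exacts [⟨0, by simpa using h'⟩, ⟨1, by simpa using h'⟩]
    · simp only [Fin.sum_univ_three, Matrix.cons_val_zero, Matrix.cons_val_one,
        Matrix.head_cons, Matrix.cons_val_two, Matrix.tail_cons]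
      linear_combination heq
  · obtain ⟨x, y, z, hu, heq⟩ := base (hε 0) (hε 2) (hε 1) δ hab α
    refine ⟨![x, z, y], ?_, ?_⟩
    · rcases hu with h' | h'
      exacts [⟨0, by simpa using h'⟩, ⟨2, by simpa using h'⟩]
    · simp only [Fin.sum_univ_three, Matrix.cons_val_zero, Matrix.cons_val_one,
        Matrix.head_cons, Matrix.cons_val_two, Matrix.tail_cons]
      linear_combination heq
  · obtain ⟨x, y, z, hu, heq⟩ := base (hε 1) (hε 2) (hε 0) δ hab α
    refine ⟨![z, x, y], ?_, ?_⟩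
    · rcases hu with h' | h'
      exacts [⟨1, by simpa using h'⟩, ⟨2, by simpa using h'⟩]
    · simp only [Fin.sum_univ_three, Matrix.cons_val_zero, Matrix.cons_val_one,
        Matrix.head_cons, Matrix.cons_val_two, Matrix.tail_cons]
      linear_combination heq

private lemma eight_dvd {w : ℤ_[2]} (h : (PadicInt.toZModPow 3) w = 0) : ∃ d, w = 8 * d := by
  rw [← RingHom.mem_ker, PadicInt.ker_toZModPow, Ideal.mem_span_singleton] at h
  obtain ⟨d, hd⟩ := h
  refine ⟨d, ?_⟩
  push_cast at hd
  linear_combination hd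

private lemma pairne {u v : ℤ_[2]} (h : ¬∃ δ : ℤ_[2], u = -v + 4 * δ) :
    ((PadicInt.toZModPow 3) u + (PadicInt.toZModPow 3) v ≠ 0 ∧
     (PadicInt.toZModPow 3) u + (PadicInt.toZModPow 3) v ≠ 4) := by
  rw [← map_add]
  constructor
  · intro h0
    obtain ⟨d, hd⟩ := eight_dvd h0
    exact h ⟨2*d, by linear_combination hd⟩
  · intro h4
    have h0 : (PadicInt.toZModPow 3) (u + v - 4) = 0 := by
      rw [map_sub, h4, map_ofNat, sub_self]
    obtain ⟨d, hd⟩ := eight_dvd h0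
    exact h ⟨1 + 2*d, by linear_combination hd⟩

private lemma nonrep (ε : Fin 3 → ℤ_[2]) (hε : ∀ i, IsUnit (ε i))
    (h : ¬∃ i j : Fin 3, ∃ δ : ℤ_[2], ε i = -ε j + 4 * δ) :
    ¬∀ α : ℤ_[2], ∃ x : Fin 3 → ℤ_[2], ∑ i : Fin 3, ε i * x i ^ 2 = α := by
  intro hU
  set φ := (PadicInt.toZModPow 3 : ℤ_[2] →+* ZMod 8) with hφ
  have p01 := pairne (fun ⟨δ, hd⟩ => h ⟨0, 1, δ, hd⟩)
  have p02 := pairne (fun ⟨δ, hd⟩ => h ⟨0, 2, δ, hd⟩)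
  have p12 := pairne (fun ⟨δ, hd⟩ => h ⟨1, 2, δ, hd⟩)
  set r : ZMod 8 := φ (ε 0) + φ (ε 1) + φ (ε 2) + 4 with hr
  obtain ⟨x, hx⟩ := hU ((r.val : ℕ) : ℤ_[2])
  rw [Fin.sum_univ_three] at hx
  have hφx := congrArg φ hx
  rw [map_add, map_add, map_mul, map_mul, map_mul, map_pow, map_pow, map_pow,
    map_natCast, ZMod.natCast_val, ZMod.cast_id] at hφx
  exact miss8 (φ (ε 0)) (φ (ε 1)) (φ (ε 2))
    ⟨phi_unit4 (hε 0), phi_unit4 (hε 1), phi_unit4 (hε 2), p01, p02, p12⟩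
    (φ (x 0)) (φ (x 1)) (φ (x 2)) hφx

/-- Proposition 5.4: for units `ε₁, ε₂, ε₃` of `ℤ_[2]` and
`Q = ε₁x² + ε₂y² + ε₃z²`, the following are equivalent: `Q` is `ℤ_[2]`-universal;
`Q` is primitively `ℤ_[2]`-universal; `εᵢ ≡ -εⱼ (mod 4ℤ_[2])` for some `i, j`. -/
theorem stmt_16 (ε : Fin 3 → ℤ_[2]) (hε : ∀ i, IsUnit (ε i)) :
    ((∀ α : ℤ_[2], ∃ x : Fin 3 → ℤ_[2], ∑ i : Fin 3, ε i * x i ^ 2 = α) ↔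
      (∀ α : ℤ_[2], α ≠ 0 → ∃ x : Fin 3 → ℤ_[2],
        (∃ i, IsUnit (x i)) ∧ ∑ i : Fin 3, ε i * x i ^ 2 = α)) ∧
    ((∀ α : ℤ_[2], ∃ x : Fin 3 → ℤ_[2], ∑ i : Fin 3, ε i * x i ^ 2 = α) ↔
      ∃ i j : Fin 3, ∃ δ : ℤ_[2], ε i = -ε j + 4 * δ) := by
  have hUC : (∀ α : ℤ_[2], ∃ x : Fin 3 → ℤ_[2], ∑ i : Fin 3, ε i * x i ^ 2 = α) →
      ∃ i j : Fin 3, ∃ δ : ℤ_[2], ε i = -ε j + 4 * δ := by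
    intro hU
    by_contra hc
    exact nonrep ε hε hc hU
  have hCU : (∃ i j : Fin 3, ∃ δ : ℤ_[2], ε i = -ε j + 4 * δ) →
      ∀ α : ℤ_[2], ∃ x : Fin 3 → ℤ_[2], ∑ i : Fin 3, ε i * x i ^ 2 = α :=
    fun hC α => (primrep ε hε hC α).imp fun x hx => hx.2
  refine ⟨⟨fun hU α _ => primrep ε hε (hUC hU) α, fun hPU α => ?_⟩, hUC, hCU⟩
  by_cases h0 : α = 0
  · exact ⟨0, by simp [h0]⟩
  · exact ((hPU α h0).imp fun x hx => hx.2)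
end

section
/- Let \varepsilon_1, \varepsilon_2, \varepsilon_3, \varepsilon_4 \in \mathbb{Z}_2^\times and let Q(x) = \sum_{i=1}^4 \varepsilon_i x_i^2 over \mathbb{Z}_2. Then: (i) Q is \mathbb{Z}_2-universal; (ii) Q is primitively \mathbb{Z}_2-universal if and only if both 4 and 8 are represented by Q on primitive vectors (i.e., 4 = Q(x) and 8 = Q(y) for some x, y \in \mathbb{Z}_2^4 each having at least one unit coordinate). -/
private noncomputable def phi8 : ℤ_[2] →+* ZMod 8 := PadicInt.toZModPow 3

private lemma zmod8_unit_cases (r : ZMod 8) (h : IsUnit r) :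
    r = 1 ∨ r = 3 ∨ r = 5 ∨ r = 7 := by
  obtain ⟨b, hb⟩ := h.exists_right_inv
  have key : ∀ r b : ZMod 8, r * b = 1 → (r = 1 ∨ r = 3 ∨ r = 5 ∨ r = 7) := by decide
  exact key r b hb

private lemma odd_form (x : ℤ_[2]) (hx : IsUnit x) :
    ∃ k : Fin 4, phi8 x = 2 * ((k:ℕ) : ZMod 8) + 1 := by
  rcases zmod8_unit_cases _ (hx.map phi8) with h|h|h|h
  · exact ⟨0, by rw [h]; decide⟩
  · exact ⟨1, by rw [h]; decide⟩
  · exact ⟨2, by rw [h]; decide⟩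
  · exact ⟨3, by rw [h]; decide⟩

private lemma phi8_two : phi8 2 = 2 := by
  have : ((2:ℕ):ℤ_[2]) = 2 := by norm_num
  rw [← this, map_natCast]; norm_num

private lemma dvd_of_zmod_eq {x y : ℤ_[2]} (h : phi8 x = phi8 y) :
    (8 : ℤ_[2]) ∣ x - y := by
  have hk : x - y ∈ RingHom.ker (PadicInt.toZModPow (p := 2) 3) := by
    rw [RingHom.mem_ker, map_sub, sub_eq_zero]; exact h
  rw [PadicInt.ker_toZModPow, Ideal.mem_span_singleton] at hk
  have h2 : ((2:ℕ):ℤ_[2])^3 = 8 := by norm_num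
  rwa [h2] at hk

private lemma two_cast : ((2:ℕ):ℤ_[2]) = 2 := by norm_num

private lemma exists_sq_eq {c : ℤ_[2]} (h : (8 : ℤ_[2]) ∣ c - 1) : ∃ z : ℤ_[2], z ^ 2 = c := by
  set F : Polynomial ℤ_[2] := Polynomial.X ^ 2 - Polynomial.C c with hF
  have heval : F.eval 1 = 1 - c := by simp [hF]
  have hderiv : F.derivative.eval 1 = 2 := by
    simp [hF, Polynomial.derivative_sub]; norm_num
  have hnc : ‖(1:ℤ_[2]) - c‖ ≤ (2:ℝ) ^ (-(3:ℕ) : ℤ) := by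
    have hmem : c - 1 ∈ Ideal.span {((2:ℕ):ℤ_[2]) ^ 3} := by
      rw [Ideal.mem_span_singleton]
      have h8 : ((2:ℕ):ℤ_[2])^3 = 8 := by norm_num
      rw [h8]; exact h
    have hle := (PadicInt.norm_le_pow_iff_mem_span_pow (c - 1) 3).2 hmem
    calc ‖(1:ℤ_[2]) - c‖ = ‖c - 1‖ := by rw [← norm_neg]; ring_nf
    _ ≤ ((2:ℕ):ℝ) ^ (-(3:ℕ) : ℤ) := hle
    _ = (2:ℝ) ^ (-(3:ℕ) : ℤ) := by norm_num
  have hnorm : ‖F.eval 1‖ < ‖F.derivative.eval 1‖ ^ 2 := by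
    rw [heval, hderiv]
    have h2n : ‖(2:ℤ_[2])‖ = 2⁻¹ := by
      rw [← two_cast, PadicInt.norm_p]; norm_num
    rw [h2n]
    calc ‖(1:ℤ_[2]) - c‖ ≤ (2:ℝ) ^ (-(3:ℕ) : ℤ) := hnc
    _ < (2⁻¹:ℝ)^2 := by norm_num
  obtain ⟨z, hz, -⟩ := hensels_lemma hnorm
  refine ⟨z, ?_⟩
  have hz0 : z^2 - c = 0 := by simpa [hF] using hz
  exact sub_eq_zero.mp hz0

private lemma isUnit_of_not_dvd {x : ℤ_[2]} (h : ¬ (2:ℤ_[2]) ∣ x) : IsUnit x := by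
  rw [PadicInt.isUnit_iff]
  have h1 := PadicInt.norm_le_one x
  have h2 : ¬ ‖x‖ < 1 := by
    rw [PadicInt.norm_lt_one_iff_dvd]
    rwa [two_cast]
  exact le_antisymm h1 (not_lt.mp h2)

private lemma lift_rep (ε : Fin 4 → ℤ_[2]) (hε : ∀ i, IsUnit (ε i)) (a : Fin 4 → ℤ_[2])
    (j : Fin 4) (ha : IsUnit (a j)) (α : ℤ_[2])
    (hdvd : (8 : ℤ_[2]) ∣ α - ∑ i : Fin 4, ε i * a i ^ 2) :
    ∃ x : Fin 4 → ℤ_[2], IsUnit (x j) ∧ ∑ i : Fin 4, ε i * x i ^ 2 = α := by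
  obtain ⟨w, hw⟩ := (hε j).mul (ha.pow 2)
  set Qa : ℤ_[2] := ∑ i : Fin 4, ε i * a i ^ 2 with hQa
  set d : ℤ_[2] := (α - Qa) * ↑w⁻¹ with hd
  have hd8 : (8:ℤ_[2]) ∣ (1 + d) - 1 := by
    simpa [hd] using hdvd.mul_right (↑w⁻¹ : ℤ_[2])
  obtain ⟨z, hz⟩ := exists_sq_eq hd8
  have hdu : IsUnit (1 + d) := by
    apply isUnit_of_not_dvd
    intro h2
    have h2d : (2:ℤ_[2]) ∣ d :=
      dvd_trans (⟨4, by norm_num⟩ : (2:ℤ_[2]) ∣ 8) (hdvd.mul_right (↑w⁻¹ : ℤ_[2]))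
    have h21 : (2:ℤ_[2]) ∣ 1 := (dvd_add_right h2d).mp (by rwa [add_comm] at h2)
    have hn := PadicInt.norm_p (p := 2)
    rw [two_cast] at hn
    have hcontra := PadicInt.isUnit_iff.mp (isUnit_of_dvd_one h21)
    rw [hn] at hcontra; norm_num at hcontra
  have hzu : IsUnit z := by
    rw [← hz] at hdu
    exact (isUnit_of_mul_isUnit_left (by rwa [← sq] : IsUnit (z * z)))
  refine ⟨Function.update a j (a j * z),
    by rw [Function.update_self]; exact ha.mul hzu, ?_⟩
  have key : ∑ i : Fin 4, ε i * (Function.update a j (a j * z)) i ^ 2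
      = ε j * (a j * z) ^ 2 + ∑ i ∈ Finset.univ.erase j, ε i * a i ^ 2 := by
    rw [← Finset.add_sum_erase _ _ (Finset.mem_univ j)]
    congr 1
    · rw [Function.update_self]
    · exact Finset.sum_congr rfl fun i hi => by
        rw [Function.update_of_ne (Finset.ne_of_mem_erase hi)]
  have hsplit : Qa = ε j * a j ^ 2 + ∑ i ∈ Finset.univ.erase j, ε i * a i ^ 2 := by
    rw [hQa, ← Finset.add_sum_erase _ _ (Finset.mem_univ j)]
  rw [key]
  have hinv : (w : ℤ_[2]) * ↑w⁻¹ = 1 := w.mul_inv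
  linear_combination (ε j * a j ^ 2) * hz - hsplit - d * hw + (w:ℤ_[2]) * hd + (α - Qa) * hinv

set_option maxHeartbeats 4000000 in
set_option synthInstance.maxSize 2000 in
set_option synthInstance.maxHeartbeats 1000000 in
set_option maxRecDepth 100000 in
private lemma mod8_solvable : ∀ k₁ k₂ k₃ k₄ : Fin 4, ∀ r : ZMod 8,
    (r = 1 ∨ r = 2 ∨ r = 3 ∨ r = 5 ∨ r = 6 ∨ r = 7) →
    ∃ a₁ a₂ a₃ a₄ : Fin 3, (a₁ = 1 ∨ a₂ = 1 ∨ a₃ = 1 ∨ a₄ = 1) ∧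
      (2 * ((k₁ : ℕ) : ZMod 8) + 1) * ((a₁ : ℕ) : ZMod 8) ^ 2 +
      (2 * ((k₂ : ℕ) : ZMod 8) + 1) * ((a₂ : ℕ) : ZMod 8) ^ 2 +
      (2 * ((k₃ : ℕ) : ZMod 8) + 1) * ((a₃ : ℕ) : ZMod 8) ^ 2 +
      (2 * ((k₄ : ℕ) : ZMod 8) + 1) * ((a₄ : ℕ) : ZMod 8) ^ 2 = r := by
  decide

private lemma rep_of_mod8 (ε : Fin 4 → ℤ_[2]) (hε : ∀ i, IsUnit (ε i)) (α : ℤ_[2])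
    (h : phi8 α = 1 ∨ phi8 α = 2 ∨ phi8 α = 3 ∨ phi8 α = 5 ∨ phi8 α = 6 ∨ phi8 α = 7) :
    ∃ x : Fin 4 → ℤ_[2], (∃ i, IsUnit (x i)) ∧ ∑ i : Fin 4, ε i * x i ^ 2 = α := by
  choose k hk using fun i => odd_form (ε i) (hε i)
  obtain ⟨a₁, a₂, a₃, a₄, hone, hsum⟩ := mod8_solvable (k 0) (k 1) (k 2) (k 3) (phi8 α) h
  set A : Fin 4 → ℤ_[2] :=
    ![((a₁:ℕ):ℤ_[2]), ((a₂:ℕ):ℤ_[2]), ((a₃:ℕ):ℤ_[2]), ((a₄:ℕ):ℤ_[2])] with hA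
  have hcong : phi8 α = phi8 (∑ i : Fin 4, ε i * A i ^ 2) := by
    rw [map_sum, Fin.sum_univ_four]
    simp only [map_mul, map_pow, hA, Matrix.cons_val_zero, Matrix.cons_val_one,
      Matrix.head_cons, Matrix.cons_val_two, Matrix.tail_cons, Matrix.cons_val_three,
      map_natCast]
    rw [hk 0, hk 1, hk 2, hk 3]
    exact hsum.symm
  have hdvd := dvd_of_zmod_eq hcong
  have hj : ∃ j : Fin 4, IsUnit (A j) := by
    rcases hone with h1|h1|h1|h1
    · exact ⟨0, by simp [hA, h1]⟩
    · exact ⟨1, by simp [hA, h1]⟩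
    · exact ⟨2, by simp [hA, h1]⟩
    · exact ⟨3, by simp [hA, h1]⟩
  obtain ⟨j, hAj⟩ := hj
  obtain ⟨x, hxj, hQ⟩ := lift_rep ε hε A j hAj α hdvd
  exact ⟨x, ⟨j, hxj⟩, hQ⟩

private lemma rep_scale (ε : Fin 4 → ℤ_[2]) (x : Fin 4 → ℤ_[2]) (q : ℕ) :
    ∑ i : Fin 4, ε i * ((2:ℤ_[2])^q * x i)^2
      = ((2:ℤ_[2])^q)^2 * ∑ i : Fin 4, ε i * x i ^2 := by
  rw [Finset.mul_sum]; exact Finset.sum_congr rfl fun i _ => by ring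

private lemma rep_nonzero (ε : Fin 4 → ℤ_[2]) (hε : ∀ i, IsUnit (ε i)) (α : ℤ_[2])
    (hα : α ≠ 0) : ∃ x : Fin 4 → ℤ_[2], ∑ i : Fin 4, ε i * x i ^ 2 = α := by
  have hspec := PadicInt.unitCoeff_spec hα
  set u : ℤ_[2] := (PadicInt.unitCoeff hα : ℤ_[2]) with hu
  set n : ℕ := α.valuation with hn
  have hU : IsUnit u := (PadicInt.unitCoeff hα).isUnit
  set β : ℤ_[2] := (2:ℤ_[2])^(n % 2) * u with hβ
  have hres : phi8 β = 1 ∨ phi8 β = 2 ∨ phi8 β = 3 ∨ phi8 β = 5 ∨ phi8 β = 6 ∨ phi8 β = 7 := by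
    rcases Nat.mod_two_eq_zero_or_one n with hm | hm
    · rw [hβ, hm, pow_zero, one_mul]
      rcases zmod8_unit_cases _ (hU.map phi8) with h|h|h|h
      · exact Or.inl h
      · exact Or.inr (Or.inr (Or.inl h))
      · exact Or.inr (Or.inr (Or.inr (Or.inl h)))
      · exact Or.inr (Or.inr (Or.inr (Or.inr (Or.inr h))))
    · rw [hβ, hm, pow_one, map_mul, phi8_two]
      rcases zmod8_unit_cases _ (hU.map phi8) with h|h|h|h
      · rw [h]; exact Or.inr (Or.inl (by decide))
      · rw [h]; exact Or.inr (Or.inr (Or.inr (Or.inr (Or.inl (by decide)))))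
      · rw [h]; exact Or.inr (Or.inl (by decide))
      · rw [h]; exact Or.inr (Or.inr (Or.inr (Or.inr (Or.inl (by decide)))))
  obtain ⟨x, -, hQx⟩ := rep_of_mod8 ε hε β hres
  refine ⟨fun i => (2:ℤ_[2])^(n / 2) * x i, ?_⟩
  rw [rep_scale, hQx]
  have hnm : 2 * (n / 2) + n % 2 = n := Nat.div_add_mod n 2
  calc ((2:ℤ_[2])^(n/2))^2 * ((2:ℤ_[2])^(n % 2) * u)
      = (2:ℤ_[2])^(2*(n/2) + n % 2) * u := by rw [pow_add, ← pow_mul]; ring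
    _ = (2:ℤ_[2])^n * u := by rw [hnm]
    _ = α := by rw [hspec, two_cast]; ring

/-- Proposition 5.6: for units `ε₁, …, ε₄` of `ℤ_[2]` and `Q = ∑ εᵢxᵢ²`:
(i) `Q` is `ℤ_[2]`-universal; (ii) `Q` is primitively `ℤ_[2]`-universal iff both
`4` and `8` are primitively represented by `Q`. -/
theorem stmt_17 (ε : Fin 4 → ℤ_[2]) (hε : ∀ i, IsUnit (ε i)) :
    (∀ α : ℤ_[2], ∃ x : Fin 4 → ℤ_[2], ∑ i : Fin 4, ε i * x i ^ 2 = α) ∧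
    ((∀ α : ℤ_[2], α ≠ 0 → ∃ x : Fin 4 → ℤ_[2],
        (∃ i, IsUnit (x i)) ∧ ∑ i : Fin 4, ε i * x i ^ 2 = α) ↔
      ((∃ x : Fin 4 → ℤ_[2],
          (∃ i, IsUnit (x i)) ∧ ∑ i : Fin 4, ε i * x i ^ 2 = 4) ∧
       (∃ y : Fin 4 → ℤ_[2],
          (∃ i, IsUnit (y i)) ∧ ∑ i : Fin 4, ε i * y i ^ 2 = 8))) := by
  constructor
  · intro α
    by_cases hα : α = 0
    · exact ⟨0, by simp [hα]⟩
    · exact rep_nonzero ε hε α hα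
  constructor
  · intro H
    exact ⟨H 4 (by norm_num), H 8 (by norm_num)⟩
  · rintro ⟨⟨x, ⟨jx, hjx⟩, hQx⟩, ⟨y, ⟨jy, hjy⟩, hQy⟩⟩ α hα
    have hcases : ∀ t : ZMod 8,
        t = 0 ∨ t = 1 ∨ t = 2 ∨ t = 3 ∨ t = 4 ∨ t = 5 ∨ t = 6 ∨ t = 7 := by decide
    have h4 : phi8 4 = 4 := by
      have : ((4:ℕ):ℤ_[2]) = 4 := by norm_num
      rw [← this, map_natCast]; decide
    have h8 : phi8 8 = 0 := by
      have : ((8:ℕ):ℤ_[2]) = 8 := by norm_num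
      rw [← this, map_natCast]; decide
    rcases hcases (phi8 α) with h|h|h|h|h|h|h|h
    · -- residue 0 : lift from the representation of 8
      have hcong : phi8 α = phi8 (∑ i : Fin 4, ε i * y i ^ 2) := by rw [hQy, h8, h]
      obtain ⟨x', hx', hQ'⟩ := lift_rep ε hε y jy hjy α (dvd_of_zmod_eq hcong)
      exact ⟨x', ⟨jy, hx'⟩, hQ'⟩
    · exact rep_of_mod8 ε hε α (Or.inl h)
    · exact rep_of_mod8 ε hε α (Or.inr (Or.inl h))
    · exact rep_of_mod8 ε hε α (Or.inr (Or.inr (Or.inl h)))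
    · -- residue 4 : lift from the representation of 4
      have hcong : phi8 α = phi8 (∑ i : Fin 4, ε i * x i ^ 2) := by rw [hQx, h4, h]
      obtain ⟨x', hx', hQ'⟩ := lift_rep ε hε x jx hjx α (dvd_of_zmod_eq hcong)
      exact ⟨x', ⟨jx, hx'⟩, hQ'⟩
    · exact rep_of_mod8 ε hε α (Or.inr (Or.inr (Or.inr (Or.inl h))))
    · exact rep_of_mod8 ε hε α (Or.inr (Or.inr (Or.inr (Or.inr (Or.inl h)))))
    · exact rep_of_mod8 ε hε α (Or.inr (Or.inr (Or.inr (Or.inr (Or.inr h)))))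
end
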